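/- arXiv:1811.02712 — 8 statements merged into one kernel-verified Lean document; each statement's English description precedes it below -/
import Mathlib

section
/- Let R be a commutative ring and let A₁, A₂, A₃ be R-modules, each equipped with an R-trilinear map mᵢ : Aᵢ × Aᵢ × Aᵢ → Aᵢ that is totally ternary associative, i.e. mᵢ(mᵢ(a,b,c),d,e) = mᵢ(a,mᵢ(b,c,d),e) = mᵢ(a,b,mᵢ(c,d,e)) for all a,b,c,d,e ∈ Aᵢ. Then the R-trilinear map M on the tensor product A₁ ⊗[R] A₂ ⊗[R] A₃ determined on pure tensors by M(a₁⊗a₂⊗a₃, b₁⊗b₂⊗b₃, c₁⊗c₂⊗c₃) = m₁(a₁,b₁,c₁) ⊗ m₂(a₂,b₂,c₂) ⊗ m₃(a₃,b₃,c₃) is again totally ternary associative: M(M(x,y,z),u,v) = M(x,M(y,z,u),v) = M(x,y,M(z,u,v)) for all x,y,z,u,v ∈ A₁⊗A₂⊗A₃. -/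
open scoped TensorProduct

/-- The tensor product of three totally ternary associative trilinear multiplications is
again totally ternary associative: if `M` is the `R`-trilinear map on
`A₁ ⊗[R] A₂ ⊗[R] A₃` determined on pure tensors componentwise by `m₁, m₂, m₃`
(i.e. `μ_⊗ = (μ₁⊗μ₂⊗μ₃)∘τ_medial`), then `M` is totally ternary associative. -/
theorem stmt4 (R A₁ A₂ A₃ : Type*) [CommRing R]
    [AddCommGroup A₁] [Module R A₁] [AddCommGroup A₂] [Module R A₂]
    [AddCommGroup A₃] [Module R A₃]
    (m₁ : A₁ →ₗ[R] A₁ →ₗ[R] A₁ →ₗ[R] A₁)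
    (m₂ : A₂ →ₗ[R] A₂ →ₗ[R] A₂ →ₗ[R] A₂)
    (m₃ : A₃ →ₗ[R] A₃ →ₗ[R] A₃ →ₗ[R] A₃)
    (h₁ : ∀ a b c d e : A₁,
      m₁ (m₁ a b c) d e = m₁ a (m₁ b c d) e ∧ m₁ a (m₁ b c d) e = m₁ a b (m₁ c d e))
    (h₂ : ∀ a b c d e : A₂,
      m₂ (m₂ a b c) d e = m₂ a (m₂ b c d) e ∧ m₂ a (m₂ b c d) e = m₂ a b (m₂ c d e))
    (h₃ : ∀ a b c d e : A₃,
      m₃ (m₃ a b c) d e = m₃ a (m₃ b c d) e ∧ m₃ a (m₃ b c d) e = m₃ a b (m₃ c d e))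
    (M : (A₁ ⊗[R] (A₂ ⊗[R] A₃)) →ₗ[R] (A₁ ⊗[R] (A₂ ⊗[R] A₃)) →ₗ[R]
      (A₁ ⊗[R] (A₂ ⊗[R] A₃)) →ₗ[R] (A₁ ⊗[R] (A₂ ⊗[R] A₃)))
    (hM : ∀ (a₁ b₁ c₁ : A₁) (a₂ b₂ c₂ : A₂) (a₃ b₃ c₃ : A₃),
      M (a₁ ⊗ₜ[R] (a₂ ⊗ₜ[R] a₃)) (b₁ ⊗ₜ[R] (b₂ ⊗ₜ[R] b₃)) (c₁ ⊗ₜ[R] (c₂ ⊗ₜ[R] c₃))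
        = (m₁ a₁ b₁ c₁) ⊗ₜ[R] ((m₂ a₂ b₂ c₂) ⊗ₜ[R] (m₃ a₃ b₃ c₃))) :
    ∀ x y z u v : A₁ ⊗[R] (A₂ ⊗[R] A₃),
      M (M x y z) u v = M x (M y z u) v ∧ M x (M y z u) v = M x y (M z u v) := by
  have h₁₁ : ∀ a b c d e : A₁, m₁ (m₁ a b c) d e = m₁ a (m₁ b c d) e := fun a b c d e => (h₁ a b c d e).1
  have h₁₂ : ∀ a b c d e : A₁, m₁ a (m₁ b c d) e = m₁ a b (m₁ c d e) := fun a b c d e => (h₁ a b c d e).2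
  have h₂₁ : ∀ a b c d e : A₂, m₂ (m₂ a b c) d e = m₂ a (m₂ b c d) e := fun a b c d e => (h₂ a b c d e).1
  have h₂₂ : ∀ a b c d e : A₂, m₂ a (m₂ b c d) e = m₂ a b (m₂ c d e) := fun a b c d e => (h₂ a b c d e).2
  have h₃₁ : ∀ a b c d e : A₃, m₃ (m₃ a b c) d e = m₃ a (m₃ b c d) e := fun a b c d e => (h₃ a b c d e).1
  have h₃₂ : ∀ a b c d e : A₃, m₃ a (m₃ b c d) e = m₃ a b (m₃ c d e) := fun a b c d e => (h₃ a b c d e).2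
  intro x y z u v
  refine ⟨?_, ?_⟩ <;>
  · induction x using TensorProduct.induction_on with
    | zero => simp
    | add p q hp hq => simp only [map_add, LinearMap.add_apply, TensorProduct.tmul_add, hp, hq]
    | tmul a₁ t₁ =>
      induction t₁ using TensorProduct.induction_on with
      | zero => simp
      | add p q hp hq => simp only [map_add, LinearMap.add_apply, TensorProduct.tmul_add, hp, hq]
      | tmul a₂ a₃ =>
        induction y using TensorProduct.induction_on with
        | zero => simp
        | add p q hp hq => simp only [map_add, LinearMap.add_apply, TensorProduct.tmul_add, hp, hq]
        | tmul b₁ t₂ =>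
          induction t₂ using TensorProduct.induction_on with
          | zero => simp
          | add p q hp hq => simp only [map_add, LinearMap.add_apply, TensorProduct.tmul_add, hp, hq]
          | tmul b₂ b₃ =>
            induction z using TensorProduct.induction_on with
            | zero => simp
            | add p q hp hq => simp only [map_add, LinearMap.add_apply, TensorProduct.tmul_add, hp, hq]
            | tmul c₁ t₃ =>
              induction t₃ using TensorProduct.induction_on with
              | zero => simp
              | add p q hp hq => simp only [map_add, LinearMap.add_apply, TensorProduct.tmul_add, hp, hq]
              | tmul c₂ c₃ =>
                induction u using TensorProduct.induction_on with
                | zero => simp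
                | add p q hp hq => simp only [map_add, LinearMap.add_apply, TensorProduct.tmul_add, hp, hq]
                | tmul d₁ t₄ =>
                  induction t₄ using TensorProduct.induction_on with
                  | zero => simp
                  | add p q hp hq => simp only [map_add, LinearMap.add_apply, TensorProduct.tmul_add, hp, hq]
                  | tmul d₂ d₃ =>
                    induction v using TensorProduct.induction_on with
                    | zero => simp
                    | add p q hp hq => simp only [map_add, LinearMap.add_apply, TensorProduct.tmul_add, hp, hq]
                    | tmul e₁ t₅ =>
                      induction t₅ using TensorProduct.induction_on with
                      | zero => simp
                      | add p q hp hq => simp only [map_add, LinearMap.add_apply, TensorProduct.tmul_add, hp, hq]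
                      | tmul e₂ e₃ =>
                        simp only [hM, h₁₁, h₁₂, h₂₁, h₂₂, h₃₁, h₃₂]
end

section
/- Let C be the free ℂ-module on two basis vectors a and b, and let Δ : C →ₗ[ℂ] C⊗C⊗C be the unique linear map with Δ(a) = a⊗b⊗a and Δ(b) = b⊗a⊗b. Then Δ is nonderived: there is no ℂ-linear map Δ₀ : C →ₗ[ℂ] C⊗C such that both (Δ₀⊗id_C)∘Δ₀ = Δ and (id_C⊗Δ₀)∘Δ₀ = Δ (up to canonical associator isomorphisms). -/
open scoped TensorProduct

namespace Stmt8Aux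

noncomputable section

abbrev C2 := ℂ × ℂ

/-- pairing functional: `x ⊗ y ↦ γ x * δ y`. -/
def φ (γ δ : C2 →ₗ[ℂ] ℂ) : C2 ⊗[ℂ] C2 →ₗ[ℂ] ℂ :=
  (TensorProduct.lid ℂ ℂ).toLinearMap ∘ₗ TensorProduct.map γ δ

def ℓm (γ : C2 →ₗ[ℂ] ℂ) : C2 ⊗[ℂ] C2 →ₗ[ℂ] C2 :=
  (TensorProduct.lid ℂ C2).toLinearMap ∘ₗ TensorProduct.map γ LinearMap.id

def rm (γ : C2 →ₗ[ℂ] ℂ) : C2 ⊗[ℂ] C2 →ₗ[ℂ] C2 :=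
  (TensorProduct.rid ℂ C2).toLinearMap ∘ₗ TensorProduct.map LinearMap.id γ

def Lm (γ : C2 →ₗ[ℂ] ℂ) : C2 ⊗[ℂ] (C2 ⊗[ℂ] C2) →ₗ[ℂ] C2 ⊗[ℂ] C2 :=
  (TensorProduct.lid ℂ (C2 ⊗[ℂ] C2)).toLinearMap ∘ₗ TensorProduct.map γ LinearMap.id

def Rm (γ : C2 →ₗ[ℂ] ℂ) : (C2 ⊗[ℂ] C2) ⊗[ℂ] C2 →ₗ[ℂ] C2 ⊗[ℂ] C2 :=
  (TensorProduct.rid ℂ (C2 ⊗[ℂ] C2)).toLinearMap ∘ₗ TensorProduct.map LinearMap.id γ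

@[simp] lemma φ_tmul (γ δ : C2 →ₗ[ℂ] ℂ) (x y : C2) :
    φ γ δ (x ⊗ₜ[ℂ] y) = γ x * δ y := by
  simp [φ, smul_eq_mul]

@[simp] lemma Lm_tmul (γ : C2 →ₗ[ℂ] ℂ) (x : C2) (y : C2 ⊗[ℂ] C2) :
    Lm γ (x ⊗ₜ[ℂ] y) = γ x • y := by
  simp [Lm]

@[simp] lemma Rm_tmul (γ : C2 →ₗ[ℂ] ℂ) (x : C2 ⊗[ℂ] C2) (y : C2) :
    Rm γ (x ⊗ₜ[ℂ] y) = γ y • x := by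
  simp [Rm]

lemma L_comp (γ : C2 →ₗ[ℂ] ℂ) (Δ₀ : C2 →ₗ[ℂ] C2 ⊗[ℂ] C2) :
    (Lm γ) ∘ₗ (TensorProduct.map LinearMap.id Δ₀) = Δ₀ ∘ₗ ℓm γ := by
  apply TensorProduct.ext'
  intro x y
  simp [Lm, ℓm, map_smul]

lemma R_comp (γ : C2 →ₗ[ℂ] ℂ) (Δ₀ : C2 →ₗ[ℂ] C2 ⊗[ℂ] C2) :
    (Rm γ) ∘ₗ (TensorProduct.map Δ₀ LinearMap.id) = Δ₀ ∘ₗ rm γ := by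
  apply TensorProduct.ext'
  intro x y
  simp [Rm, rm, map_smul]

lemma comp_ℓ (γ γ' : C2 →ₗ[ℂ] ℂ) : γ' ∘ₗ ℓm γ = φ γ γ' := by
  apply TensorProduct.ext'
  intro x y
  simp [ℓm, smul_eq_mul]

lemma comp_r (γ γ' : C2 →ₗ[ℂ] ℂ) : γ' ∘ₗ rm γ = φ γ' γ := by
  apply TensorProduct.ext'
  intro x y
  simp [rm, smul_eq_mul, mul_comm]

end

end Stmt8Aux

open Stmt8Aux

/-- On the free `ℂ`-module `C = ℂ²` with basis `a = (1,0)`, `b = (0,1)`, the ternary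
comultiplication `Δ(a) = a⊗b⊗a`, `Δ(b) = b⊗a⊗b` is nonderived: there is no binary
comultiplication `Δ₀` with `(Δ₀ ⊗ id) ∘ Δ₀ = Δ = (id ⊗ Δ₀) ∘ Δ₀` (up to the canonical
associator). -/
theorem stmt8 (Δ : (ℂ × ℂ) →ₗ[ℂ] (ℂ × ℂ) ⊗[ℂ] ((ℂ × ℂ) ⊗[ℂ] (ℂ × ℂ)))
    (ha : Δ (1, 0) = ((1, 0) : ℂ × ℂ) ⊗ₜ[ℂ] ((((0, 1) : ℂ × ℂ)) ⊗ₜ[ℂ] (((1, 0) : ℂ × ℂ))))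
    (hb : Δ (0, 1) = ((0, 1) : ℂ × ℂ) ⊗ₜ[ℂ] ((((1, 0) : ℂ × ℂ)) ⊗ₜ[ℂ] (((0, 1) : ℂ × ℂ)))) :
    ¬ ∃ Δ₀ : (ℂ × ℂ) →ₗ[ℂ] (ℂ × ℂ) ⊗[ℂ] (ℂ × ℂ),
      ((TensorProduct.assoc ℂ (ℂ × ℂ) (ℂ × ℂ) (ℂ × ℂ)).toLinearMap).comp
          ((TensorProduct.map Δ₀ LinearMap.id).comp Δ₀) = Δ ∧
        (TensorProduct.map LinearMap.id Δ₀).comp Δ₀ = Δ := by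
  rintro ⟨Δ₀, h1, h2⟩
  set α : C2 →ₗ[ℂ] ℂ := LinearMap.fst ℂ ℂ ℂ with hα
  set β : C2 →ₗ[ℂ] ℂ := LinearMap.snd ℂ ℂ ℂ with hβ
  set a : C2 := (1, 0) with ha'
  set b : C2 := (0, 1) with hb'
  set w : C2 ⊗[ℂ] C2 := Δ₀ a with hw
  -- the two factorization equations evaluated at `a`
  have hw2 : (TensorProduct.map LinearMap.id Δ₀) w = a ⊗ₜ[ℂ] (b ⊗ₜ[ℂ] a) := by
    have := LinearMap.congr_fun h2 a
    simpa [ha'] using this.trans ha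
  have hw1 : (TensorProduct.map Δ₀ LinearMap.id) w = (a ⊗ₜ[ℂ] b) ⊗ₜ[ℂ] a := by
    have h := LinearMap.congr_fun h1 a
    simp only [LinearMap.comp_apply] at h
    apply (TensorProduct.assoc ℂ C2 C2 C2).injective
    rw [TensorProduct.assoc_tmul]
    exact h.trans ha
  have hαa : α a = 1 := by simp [ha', hα]
  have hβa : β a = 0 := by simp [ha', hβ]
  -- the four consequences
  have hu : Δ₀ (ℓm α w) = b ⊗ₜ[ℂ] a := by
    have := LinearMap.congr_fun (L_comp α Δ₀) w
    simp only [LinearMap.comp_apply] at this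
    rw [hw2, Lm_tmul, hαa, one_smul] at this
    exact this.symm
  have hv : Δ₀ (ℓm β w) = 0 := by
    have := LinearMap.congr_fun (L_comp β Δ₀) w
    simp only [LinearMap.comp_apply] at this
    rw [hw2, Lm_tmul, hβa, zero_smul] at this
    exact this.symm
  have hp : Δ₀ (rm α w) = a ⊗ₜ[ℂ] b := by
    have := LinearMap.congr_fun (R_comp α Δ₀) w
    simp only [LinearMap.comp_apply] at this
    rw [hw1, Rm_tmul, hαa, one_smul] at this
    exact this.symm
  have hq : Δ₀ (rm β w) = 0 := by
    have := LinearMap.congr_fun (R_comp β Δ₀) w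
    simp only [LinearMap.comp_apply] at this
    rw [hw1, Rm_tmul, hβa, zero_smul] at this
    exact this.symm
  -- coordinates
  set c12 : ℂ := φ α β w with hc12
  set c21 : ℂ := φ β α w with hc21
  have e1 : (ℓm α w).1 = (rm α w).1 := by
    have h1 := LinearMap.congr_fun (comp_ℓ α α) w
    have h2 := LinearMap.congr_fun (comp_r α α) w
    simp only [LinearMap.comp_apply, hα, LinearMap.fst_apply] at h1 h2
    rw [h1, h2]
  have e2 : (ℓm α w).2 = c12 := by
    have h1 := LinearMap.congr_fun (comp_ℓ α β) w
    simpa [hβ] using h1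
  have e3 : (rm α w).2 = c21 := by
    have h1 := LinearMap.congr_fun (comp_r α β) w
    simpa [hβ] using h1
  have e4 : (rm β w).1 = c12 := by
    have h1 := LinearMap.congr_fun (comp_r β α) w
    simpa [hα] using h1
  have e5 : (ℓm β w).1 = c21 := by
    have h1 := LinearMap.congr_fun (comp_ℓ β α) w
    simpa [hα] using h1
  have e6 : (ℓm β w).2 = (rm β w).2 := by
    have h1 := LinearMap.congr_fun (comp_ℓ β β) w
    have h2 := LinearMap.congr_fun (comp_r β β) w
    simp only [LinearMap.comp_apply, hβ, LinearMap.snd_apply] at h1 h2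
    rw [h1, h2]
  have hup : ℓm α w - rm α w = (c12 - c21) • b := by
    apply Prod.ext
    · simp [hb', e1]
    · simp [hb', e2, e3]
  have hqv : rm β w - ℓm β w = (c12 - c21) • a := by
    apply Prod.ext
    · simp [ha', e4, e5]
    · simp [ha', e6]
  have E1 : (c12 - c21) • Δ₀ b = b ⊗ₜ[ℂ] a - a ⊗ₜ[ℂ] b := by
    rw [← map_smul, ← hup, map_sub, hu, hp]
  have E2 : (c12 - c21) • Δ₀ a = 0 := by
    rw [← map_smul, ← hqv, map_sub, hq, hv, sub_zero]
  by_cases hc : c12 = c21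
  · rw [hc, sub_self, zero_smul] at E1
    have := congrArg (φ β α) E1
    simp only [map_zero, map_sub, φ_tmul] at this
    rw [hαa, hβa] at this
    have hβb : β b = 1 := by simp [hb', hβ]
    have hαb : α b = 0 := by simp [hb', hα]
    rw [hβb, hαb] at this
    norm_num at this
  · have hne : c12 - c21 ≠ 0 := sub_ne_zero.mpr hc
    have hΔ₀a : Δ₀ a = 0 := by
      rcases smul_eq_zero.mp E2 with h | h
      · exact absurd h hne
      · exact h
    rw [hw, hΔ₀a, map_zero] at hw2
    -- so a ⊗ b ⊗ a = 0, contradiction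
    set ψ : C2 ⊗[ℂ] (C2 ⊗[ℂ] C2) →ₗ[ℂ] ℂ :=
      (TensorProduct.lid ℂ ℂ).toLinearMap ∘ₗ TensorProduct.map α (φ β α) with hψ
    have hz : ψ (a ⊗ₜ[ℂ] (b ⊗ₜ[ℂ] a)) = ψ 0 := congrArg ψ hw2.symm
    rw [ψ.map_zero] at hz
    have this : α a • (β b * α a) = (0 : ℂ) := by
      rw [← hz, hψ]
      simp only [LinearMap.comp_apply, TensorProduct.map_tmul, φ_tmul,
        LinearEquiv.coe_coe, TensorProduct.lid_tmul]
    rw [hαa] at this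
    have hβb : β b = 1 := by simp [hb', hβ]
    rw [hβb] at this
    norm_num at this
end

section
/- Let C be the free ℂ-module on four basis vectors x, g₁, g₂, g₃, and let Δ : C →ₗ[ℂ] C⊗C⊗C be the unique linear map with Δ(x) = g₁⊗x⊗x + x⊗g₂⊗x + x⊗x⊗g₃ and Δ(gᵢ) = gᵢ⊗gᵢ⊗gᵢ for i = 1,2,3. Then Δ is not totally ternary coassociative; in fact (Δ⊗id_C⊗id_C)∘Δ ≠ (id_C⊗id_C⊗Δ)∘Δ as linear maps C → C^{⊗5}. -/
open scoped TensorProduct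

/-- `(Δ ⊗ id ⊗ id) ∘ Δ : C → C^{⊗5}`, written with the canonical associators so that it
lands in the right-nested fivefold tensor power. -/
noncomputable def coassocComp1 {R C : Type*} [CommRing R] [AddCommGroup C] [Module R C]
    (Δ : C →ₗ[R] C ⊗[R] (C ⊗[R] C)) :
    C →ₗ[R] C ⊗[R] (C ⊗[R] (C ⊗[R] (C ⊗[R] C))) :=
  (((TensorProduct.assoc R C (C ⊗[R] C) (C ⊗[R] C)).trans
      (TensorProduct.congr (LinearEquiv.refl R C)
        (TensorProduct.assoc R C C (C ⊗[R] C)))).toLinearMap).comp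
    ((TensorProduct.map Δ LinearMap.id).comp Δ)

/-- `(id ⊗ Δ ⊗ id) ∘ Δ : C → C^{⊗5}`, written with the canonical associators. -/
noncomputable def coassocComp2 {R C : Type*} [CommRing R] [AddCommGroup C] [Module R C]
    (Δ : C →ₗ[R] C ⊗[R] (C ⊗[R] C)) :
    C →ₗ[R] C ⊗[R] (C ⊗[R] (C ⊗[R] (C ⊗[R] C))) :=
  ((TensorProduct.congr (LinearEquiv.refl R C)
      ((TensorProduct.assoc R C (C ⊗[R] C) C).trans
        (TensorProduct.congr (LinearEquiv.refl R C)
          (TensorProduct.assoc R C C C)))).toLinearMap).comp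
    ((TensorProduct.map LinearMap.id (TensorProduct.map Δ LinearMap.id)).comp Δ)

/-- `(id ⊗ id ⊗ Δ) ∘ Δ : C → C^{⊗5}`. -/
noncomputable def coassocComp3 {R C : Type*} [CommRing R] [AddCommGroup C] [Module R C]
    (Δ : C →ₗ[R] C ⊗[R] (C ⊗[R] C)) :
    C →ₗ[R] C ⊗[R] (C ⊗[R] (C ⊗[R] (C ⊗[R] C))) :=
  (TensorProduct.map LinearMap.id (TensorProduct.map LinearMap.id Δ)).comp Δ

/-- Total ternary coassociativity of a ternary comultiplication `Δ : C → C^{⊗3}`. -/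
noncomputable def TernaryCoassoc {R C : Type*} [CommRing R] [AddCommGroup C] [Module R C]
    (Δ : C →ₗ[R] C ⊗[R] (C ⊗[R] C)) : Prop :=
  coassocComp1 Δ = coassocComp2 Δ ∧ coassocComp2 Δ = coassocComp3 Δ


noncomputable def pairF {A B : Type*} [AddCommMonoid A] [Module ℂ A] [AddCommMonoid B]
    [Module ℂ B] (f : A →ₗ[ℂ] ℂ) (g : B →ₗ[ℂ] ℂ) : A ⊗[ℂ] B →ₗ[ℂ] ℂ :=
  TensorProduct.lift (((LinearMap.lsmul ℂ ℂ).comp f).compl₂ g)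

@[simp] lemma pairF_tmul {A B : Type*} [AddCommMonoid A] [Module ℂ A] [AddCommMonoid B]
    [Module ℂ B] (f : A →ₗ[ℂ] ℂ) (g : B →ₗ[ℂ] ℂ) (a : A) (b : B) :
    pairF f g (a ⊗ₜ[ℂ] b) = f a * g b := rfl

noncomputable def projC (i : Fin 4) : (Fin 4 → ℂ) →ₗ[ℂ] ℂ := LinearMap.proj i

noncomputable def phi5 : (Fin 4 → ℂ) ⊗[ℂ] ((Fin 4 → ℂ) ⊗[ℂ] ((Fin 4 → ℂ) ⊗[ℂ]
    ((Fin 4 → ℂ) ⊗[ℂ] (Fin 4 → ℂ)))) →ₗ[ℂ] ℂ :=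
  pairF (projC 1) (pairF (projC 1) (pairF (projC 1) (pairF (projC 0) (projC 0))))

/-- On the free `ℂ`-module with basis `x, g₁, g₂, g₃`, the ternary comultiplication of a
'nonlinear' skew primitive element, `Δ(x) = g₁⊗x⊗x + x⊗g₂⊗x + x⊗x⊗g₃` with semigroup-like
`gᵢ` (`Δ(gᵢ) = gᵢ⊗gᵢ⊗gᵢ`), is not totally ternary coassociative; in fact
`(Δ⊗id⊗id)∘Δ ≠ (id⊗id⊗Δ)∘Δ`. -/
theorem stmt9 (Δ : (Fin 4 → ℂ) →ₗ[ℂ] (Fin 4 → ℂ) ⊗[ℂ] ((Fin 4 → ℂ) ⊗[ℂ] (Fin 4 → ℂ)))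
    (hx : Δ (Pi.single 0 1) =
      (Pi.single 1 1 : Fin 4 → ℂ) ⊗ₜ[ℂ]
          ((Pi.single 0 1 : Fin 4 → ℂ) ⊗ₜ[ℂ] (Pi.single 0 1 : Fin 4 → ℂ)) +
        (Pi.single 0 1 : Fin 4 → ℂ) ⊗ₜ[ℂ]
          ((Pi.single 2 1 : Fin 4 → ℂ) ⊗ₜ[ℂ] (Pi.single 0 1 : Fin 4 → ℂ)) +
        (Pi.single 0 1 : Fin 4 → ℂ) ⊗ₜ[ℂ]
          ((Pi.single 0 1 : Fin 4 → ℂ) ⊗ₜ[ℂ] (Pi.single 3 1 : Fin 4 → ℂ)))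
    (hg1 : Δ (Pi.single 1 1) =
      (Pi.single 1 1 : Fin 4 → ℂ) ⊗ₜ[ℂ]
        ((Pi.single 1 1 : Fin 4 → ℂ) ⊗ₜ[ℂ] (Pi.single 1 1 : Fin 4 → ℂ)))
    (hg2 : Δ (Pi.single 2 1) =
      (Pi.single 2 1 : Fin 4 → ℂ) ⊗ₜ[ℂ]
        ((Pi.single 2 1 : Fin 4 → ℂ) ⊗ₜ[ℂ] (Pi.single 2 1 : Fin 4 → ℂ)))
    (hg3 : Δ (Pi.single 3 1) =
      (Pi.single 3 1 : Fin 4 → ℂ) ⊗ₜ[ℂ]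
        ((Pi.single 3 1 : Fin 4 → ℂ) ⊗ₜ[ℂ] (Pi.single 3 1 : Fin 4 → ℂ))) :
    ¬ TernaryCoassoc Δ ∧ coassocComp1 Δ ≠ coassocComp3 Δ := by
  have key : coassocComp1 Δ ≠ coassocComp3 Δ := by
    intro h
    have h0 := congrArg (fun F => phi5 (F (Pi.single 0 1))) h
    simp only [coassocComp1, coassocComp3, LinearMap.comp_apply, hx, hg1, hg2, hg3,
      map_add, TensorProduct.map_tmul, LinearMap.id_apply, TensorProduct.add_tmul,
      TensorProduct.tmul_add, LinearEquiv.trans_apply, TensorProduct.assoc_tmul,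
      TensorProduct.congr_tmul, LinearEquiv.refl_apply, LinearEquiv.coe_coe,
      pairF_tmul, phi5, projC, LinearMap.proj_apply] at h0
    norm_num [Pi.single_apply] at h0
  refine ⟨fun htc => key ?_, key⟩
  exact htc.1.trans htc.2
end

section
/- The ternary operation f on ℂ × ℂ defined by f((a₁,a₂),(b₁,b₂),(c₁,c₂)) = (a₁·b₂·c₁, a₂·b₁·c₂) is totally ternary associative: for all a, b, c, d, e ∈ ℂ × ℂ one has f(f(a,b,c),d,e) = f(a,f(b,c,d),e) = f(a,b,f(c,d,e)). -/
/-- The ternary multiplication `μ_A^{(3)}` of the polyadic algebra `A^{(3,3;3,3;2)}`: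
`f((a₁,a₂),(b₁,b₂),(c₁,c₂)) = (a₁·b₂·c₁, a₂·b₁·c₂)` on `ℂ × ℂ`. -/
def ternMul (a b c : ℂ × ℂ) : ℂ × ℂ :=
  (a.1 * b.2 * c.1, a.2 * b.1 * c.2)

/-- The ternary operation `f` on `ℂ × ℂ` is totally ternary associative. -/
theorem stmt10 :
    ∀ a b c d e : ℂ × ℂ,
      ternMul (ternMul a b c) d e = ternMul a (ternMul b c d) e ∧
        ternMul a (ternMul b c d) e = ternMul a b (ternMul c d e) := by
  intro a b c d e
  constructor <;> simp only [ternMul, Prod.ext_iff] <;> constructor <;> ring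
end

section
/- The set S = { i·p/q : p, q odd integers } ⊆ ℂ is closed under both the ternary multiplication and the ternary addition of complex numbers: if x, y, t ∈ S then x·y·t ∈ S and x + y + t ∈ S. -/
/-- The underlying set of the nonderived zeroless nonunital `(3,3)`-field `𝕜^{(3,3)}`:
purely imaginary numbers `i·p/q` with `p` and `q` odd integers. -/
def Sodd : Set ℂ :=
  {z : ℂ | ∃ p q : ℤ, Odd p ∧ Odd q ∧ z = Complex.I * (p : ℂ) / (q : ℂ)}

/-- `S = { i·p/q : p, q odd }` is closed under the ternary multiplication
`(x,y,t) ↦ x·y·t` and the ternary addition `(x,y,t) ↦ x+y+t` of complex numbers. -/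
theorem stmt12 :
    ∀ x ∈ Sodd, ∀ y ∈ Sodd, ∀ t ∈ Sodd, x * y * t ∈ Sodd ∧ x + y + t ∈ Sodd := by
  rintro x ⟨p1, q1, hp1, hq1, rfl⟩ y ⟨p2, q2, hp2, hq2, rfl⟩ t ⟨p3, q3, hp3, hq3, rfl⟩
  have hq1' : (q1 : ℂ) ≠ 0 := Int.cast_ne_zero.mpr (by rintro rfl; simp at hq1)
  have hq2' : (q2 : ℂ) ≠ 0 := Int.cast_ne_zero.mpr (by rintro rfl; simp at hq2)
  have hq3' : (q3 : ℂ) ≠ 0 := Int.cast_ne_zero.mpr (by rintro rfl; simp at hq3)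
  constructor
  · refine ⟨-(p1 * p2 * p3), q1 * q2 * q3, ((hp1.mul hp2).mul hp3).neg, (hq1.mul hq2).mul hq3, ?_⟩
    · push_cast
      field_simp
      ring_nf
      rw [Complex.I_sq]
      ring
  · refine ⟨p1 * q2 * q3 + p2 * q1 * q3 + p3 * q1 * q2, q1 * q2 * q3, ?_, (hq1.mul hq2).mul hq3, ?_⟩
    · rcases hp1 with ⟨a, rfl⟩
      rcases hp2 with ⟨b, rfl⟩
      rcases hp3 with ⟨c, rfl⟩
      rcases hq1 with ⟨d, rfl⟩
      rcases hq2 with ⟨e, rfl⟩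
      rcases hq3 with ⟨f, rfl⟩
      refine ⟨(2*a+1)*(2*e+1)*f + (2*a+1)*e + a + (2*b+1)*(2*d+1)*f + (2*b+1)*d + b
        + (2*c+1)*(2*d+1)*e + (2*c+1)*d + c + 1, by ring⟩
    · push_cast
      field_simp
end

section
/- The set S = { i·p/q : p, q odd integers } ⊆ ℂ is a ternary group under ternary complex addition: for all a, b, c ∈ S there exists a unique x ∈ S with a + b + x = c. In particular, every x ∈ S has its additive querelement in S: −x ∈ S and x + x + (−x) = x. -/
lemma odd_ne_zero_c {q : ℤ} (hq : Odd q) : (q : ℂ) ≠ 0 := by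
  have : q ≠ 0 := by rintro rfl; simp at hq
  exact_mod_cast this

/-- `S` is a ternary group under ternary complex addition: `a + b + x = c` has a unique
solution in `S`; every `x ∈ S` has its additive querelement `−x` in `S` with
`x + x + (−x) = x`. -/
theorem stmt14 :
    (∀ a ∈ Sodd, ∀ b ∈ Sodd, ∀ c ∈ Sodd, ∃! x, x ∈ Sodd ∧ a + b + x = c) ∧
      (∀ x ∈ Sodd, -x ∈ Sodd ∧ x + x + (-x) = x) := by
  constructor
  · rintro a ⟨p1, q1, hp1, hq1, rfl⟩ b ⟨p2, q2, hp2, hq2, rfl⟩ c ⟨p3, q3, hp3, hq3, rfl⟩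
    have h1 := odd_ne_zero_c hq1
    have h2 := odd_ne_zero_c hq2
    have h3 := odd_ne_zero_c hq3
    refine ⟨Complex.I * p3 / q3 - Complex.I * p1 / q1 - Complex.I * p2 / q2,
      ⟨⟨p3 * q1 * q2 - p1 * q3 * q2 - p2 * q1 * q3, q1 * q2 * q3,
        (((hp3.mul hq1).mul hq2).sub_odd ((hp1.mul hq3).mul hq2)).sub_odd
          ((hp2.mul hq1).mul hq3),
        (hq1.mul hq2).mul hq3, ?_⟩, by ring⟩, ?_⟩
    · push_cast
      field_simp
    · rintro y ⟨-, hy⟩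
      linear_combination hy
  · rintro x ⟨p, q, hp, hq, rfl⟩
    refine ⟨⟨-p, q, hp.neg, hq, ?_⟩, by ring⟩
    push_cast
    ring
end

section
/- Let f be the ternary operation on ℂ × ℂ given by f((a₁,a₂),(b₁,b₂),(c₁,c₂)) = (a₁·b₂·c₁, a₂·b₁·c₂) and let S = { i·p/q : p, q odd integers } ⊆ ℂ. Then S × S is closed under f, and ⟨S × S | f⟩ is a ternary group: for all a, b, c ∈ S × S, each of the three equations f(a,b,x) = c, f(a,x,b) = c, and f(x,a,b) = c has a unique solution x ∈ S × S. -/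
lemma odd_ne_zero {p : ℤ} (hp : Odd p) : (p : ℂ) ≠ 0 := by
  exact_mod_cast (by rintro rfl; simp [Int.odd_iff] at hp : p ≠ 0)

lemma Sodd_ne_zero {z : ℂ} (hz : z ∈ Sodd) : z ≠ 0 := by
  obtain ⟨p, q, hp, hq, rfl⟩ := hz
  have := odd_ne_zero hp; have := odd_ne_zero hq
  field_simp
  simp [*, Complex.I_ne_zero]

lemma Sodd_mul3 {a b c : ℂ} (ha : a ∈ Sodd) (hb : b ∈ Sodd) (hc : c ∈ Sodd) :
    a * b * c ∈ Sodd := by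
  obtain ⟨p, q, hp, hq, rfl⟩ := ha
  obtain ⟨r, s, hr, hs, rfl⟩ := hb
  obtain ⟨t, u, ht, hu, rfl⟩ := hc
  refine ⟨-(p * r * t), q * s * u, ((by simp [Int.odd_mul, hp, hr, ht] : Odd (p * r * t))).neg,
    by simp [Int.odd_mul, hq, hs, hu], ?_⟩
  have hq := odd_ne_zero hq; have hs := odd_ne_zero hs; have hu := odd_ne_zero hu
  have hI := Complex.I_sq
  push_cast
  field_simp
  ring_nf
  rw [hI]
  ring

lemma Sodd_div {a b c : ℂ} (ha : a ∈ Sodd) (hb : b ∈ Sodd) (hc : c ∈ Sodd) :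
    c / (a * b) ∈ Sodd := by
  obtain ⟨p, q, hp, hq, rfl⟩ := ha
  obtain ⟨r, s, hr, hs, rfl⟩ := hb
  obtain ⟨t, u, ht, hu, rfl⟩ := hc
  refine ⟨-(t * q * s), u * p * r, ((by simp [Int.odd_mul, ht, hq, hs] : Odd (t * q * s))).neg,
    by simp [Int.odd_mul, hu, hp, hr], ?_⟩
  have hq' := odd_ne_zero hq; have hs' := odd_ne_zero hs; have hu' := odd_ne_zero hu
  have hp' := odd_ne_zero hp; have hr' := odd_ne_zero hr
  have hI := Complex.I_sq
  push_cast
  field_simp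
  ring_nf
  rw [hI]
  ring

/-- `S × S` is closed under the ternary multiplication `f`, and `⟨S × S | f⟩` is a
ternary group: each of `f(a,b,x) = c`, `f(a,x,b) = c`, `f(x,a,b) = c` has a unique
solution `x ∈ S × S`. -/
theorem stmt17 :
    (∀ a b c : ℂ × ℂ, a ∈ Sodd ×ˢ Sodd → b ∈ Sodd ×ˢ Sodd → c ∈ Sodd ×ˢ Sodd →
        ternMul a b c ∈ Sodd ×ˢ Sodd) ∧
      ∀ a ∈ Sodd ×ˢ Sodd, ∀ b ∈ Sodd ×ˢ Sodd, ∀ c ∈ Sodd ×ˢ Sodd,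
        (∃! x, x ∈ Sodd ×ˢ Sodd ∧ ternMul a b x = c) ∧
          (∃! x, x ∈ Sodd ×ˢ Sodd ∧ ternMul a x b = c) ∧
          (∃! x, x ∈ Sodd ×ˢ Sodd ∧ ternMul x a b = c) := by
  constructor
  · rintro a b c ⟨ha1, ha2⟩ ⟨hb1, hb2⟩ ⟨hc1, hc2⟩
    exact ⟨Sodd_mul3 ha1 hb2 hc1, Sodd_mul3 ha2 hb1 hc2⟩
  · rintro a ⟨ha1, ha2⟩ b ⟨hb1, hb2⟩ c ⟨hc1, hc2⟩
    have na1 := Sodd_ne_zero ha1; have na2 := Sodd_ne_zero ha2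
    have nb1 := Sodd_ne_zero hb1; have nb2 := Sodd_ne_zero hb2
    refine ⟨⟨(c.1 / (a.1 * b.2), c.2 / (a.2 * b.1)),
        ⟨⟨Sodd_div ha1 hb2 hc1, Sodd_div ha2 hb1 hc2⟩, ?_⟩, ?_⟩,
      ⟨(c.2 / (a.2 * b.2), c.1 / (a.1 * b.1)),
        ⟨⟨Sodd_div ha2 hb2 hc2, Sodd_div ha1 hb1 hc1⟩, ?_⟩, ?_⟩,
      ⟨(c.1 / (a.2 * b.1), c.2 / (a.1 * b.2)),
        ⟨⟨Sodd_div ha2 hb1 hc1, Sodd_div ha1 hb2 hc2⟩, ?_⟩, ?_⟩⟩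
    · show (a.1 * b.2 * (c.1 / (a.1 * b.2)), a.2 * b.1 * (c.2 / (a.2 * b.1))) = c
      ext <;> simp <;> field_simp <;> ring
    · rintro ⟨y1, y2⟩ ⟨-, hy⟩
      have h1 : a.1 * b.2 * y1 = c.1 := congrArg Prod.fst hy
      have h2 : a.2 * b.1 * y2 = c.2 := congrArg Prod.snd hy
      refine Prod.ext ?_ ?_
      · exact (eq_div_iff (mul_ne_zero na1 nb2)).2 (by linear_combination h1)
      · exact (eq_div_iff (mul_ne_zero na2 nb1)).2 (by linear_combination h2)
    · show (a.1 * (c.1 / (a.1 * b.1)) * b.1, a.2 * (c.2 / (a.2 * b.2)) * b.2) = c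
      ext <;> simp <;> field_simp <;> ring
    · rintro ⟨y1, y2⟩ ⟨-, hy⟩
      have h1 : a.1 * y2 * b.1 = c.1 := congrArg Prod.fst hy
      have h2 : a.2 * y1 * b.2 = c.2 := congrArg Prod.snd hy
      refine Prod.ext ?_ ?_
      · exact (eq_div_iff (mul_ne_zero na2 nb2)).2 (by linear_combination h2)
      · exact (eq_div_iff (mul_ne_zero na1 nb1)).2 (by linear_combination h1)
    · show (c.1 / (a.2 * b.1) * a.2 * b.1, c.2 / (a.1 * b.2) * a.1 * b.2) = c
      ext <;> simp <;> field_simp <;> ring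
    · rintro ⟨y1, y2⟩ ⟨-, hy⟩
      have h1 : y1 * a.2 * b.1 = c.1 := congrArg Prod.fst hy
      have h2 : y2 * a.1 * b.2 = c.2 := congrArg Prod.snd hy
      refine Prod.ext ?_ ?_
      · exact (eq_div_iff (mul_ne_zero na2 nb1)).2 (by linear_combination h1)
      · exact (eq_div_iff (mul_ne_zero na1 nb2)).2 (by linear_combination h2)
end

section
/- Let f be the ternary operation on ℂ × ℂ given by f((a₁,a₂),(b₁,b₂),(c₁,c₂)) = (a₁·b₂·c₁, a₂·b₁·c₂) and let S = { i·p/q : p, q odd integers } ⊆ ℂ. Then the ternary ring on S × S is nonunital and zeroless: (i) there is no e ∈ ℂ × ℂ (in particular none in S × S) such that f(e,e,x) = x, f(e,x,e) = x and f(x,e,e) = x for all x ∈ S × S; (ii) there is no z ∈ S × S such that x + y + z = z (componentwise complex addition) for all x, y ∈ S × S. -/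
lemma i_mem_Sodd : Complex.I ∈ Sodd := ⟨1, 1, odd_one, odd_one, by norm_num⟩

lemma i3_mem_Sodd : Complex.I / 3 ∈ Sodd := ⟨1, 3, odd_one, ⟨1, by ring⟩, by norm_num⟩

/-- The ternary ring on `S × S` is nonunital and zeroless: (i) there is no `e ∈ ℂ × ℂ`
(in particular none in `S × S`) acting as a polyadic unit on every place, and (ii) there
is no polyadic zero `z ∈ S × S` for componentwise ternary addition. -/
theorem stmt19 :
    (¬ ∃ e : ℂ × ℂ, ∀ x ∈ Sodd ×ˢ Sodd,
        ternMul e e x = x ∧ ternMul e x e = x ∧ ternMul x e e = x) ∧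
      ¬ ∃ z ∈ Sodd ×ˢ Sodd, ∀ x ∈ Sodd ×ˢ Sodd, ∀ y ∈ Sodd ×ˢ Sodd, x + y + z = z := by
  constructor
  · rintro ⟨e, he⟩
    have h1 := (he (Complex.I, Complex.I)
      ⟨i_mem_Sodd, i_mem_Sodd⟩).2.1
    have h2 := (he (Complex.I, Complex.I / 3)
      ⟨i_mem_Sodd, i3_mem_Sodd⟩).2.1
    simp only [ternMul, Prod.ext_iff] at h1 h2
    have h3 : (2:ℂ) * Complex.I = 0 := by linear_combination h1.1 - 3 * h2.1
    have : (Complex.I:ℂ) = 0 := by linear_combination h3 / 2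
    exact Complex.I_ne_zero this
  · rintro ⟨z, -, hz⟩
    have h := hz (Complex.I, Complex.I) ⟨i_mem_Sodd, i_mem_Sodd⟩
      (Complex.I, Complex.I) ⟨i_mem_Sodd, i_mem_Sodd⟩
    have h1 : Complex.I + Complex.I + z.1 = z.1 := congrArg Prod.fst h
    have : (Complex.I : ℂ) = 0 := by linear_combination h1 / 2
    exact Complex.I_ne_zero this
end
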